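/- Let C_i ⊆ H, i ∈ I := {1,…,M}, be closed and convex sets in a real Hilbert space H with C := ⋂_{i∈I} C_i ≠ ∅. Let U := Σ_{n=1}^{N} ω_n ∏_{j∈J_n} P_{C_j}, where each J_n ⊆ I is a string (finite ordered tuple of indices), ω_n ∈ (0,1), Σ_{n=1}^{N} ω_n = 1, and I = J_1 ∪ … ∪ J_N. Then U is (1/m)-strongly quasi-nonexpansive, where m := max_{1≤n≤N} |J_n|, and Fix U = C. -/

import Mathlib

open Metric
open scoped RealInnerProductSpace

/-- `P` is the metric projection onto `C`. -/
def IsMetricProj {H : Type*} [NormedAddCommGroup H] (C : Set H) (P : H → H) : Prop :=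
  ∀ x : H, P x ∈ C ∧ ∀ z ∈ C, ‖x - P x‖ ≤ ‖x - z‖

/-- For a string `J = (j_1, …, j_l)`, `stringProd P J = P j_l ∘ ⋯ ∘ P j_1`. -/
def stringProd {H : Type*} {M : ℕ} (P : Fin M → H → H) : List (Fin M) → H → H
  | [] => id
  | j :: J => fun x => stringProd P J (P j x)

section Aux

variable {H : Type*} [NormedAddCommGroup H] [InnerProductSpace ℝ H]

/-- Sum of squared step lengths along a string of projections. -/
def stepSum {M : ℕ} (P : Fin M → H → H) : List (Fin M) → H → ℝ
  | [], _ => 0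
  | j :: L, x => ‖x - P j x‖ ^ 2 + stepSum P L (P j x)

lemma stepSum_nonneg {M : ℕ} (P : Fin M → H → H) : ∀ (L : List (Fin M)) (x : H),
    0 ≤ stepSum P L x
  | [], _ => le_refl 0
  | j :: L, x => by
      have := stepSum_nonneg P L (P j x)
      simp only [stepSum]
      positivity

lemma metricProj_sq_ineq {C : Set H} (hcv : Convex ℝ C) {Pf : H → H}
    (hPf : IsMetricProj C Pf) (x : H) {c : H} (hc : c ∈ C) :
    ‖Pf x - c‖ ^ 2 ≤ ‖x - c‖ ^ 2 - ‖x - Pf x‖ ^ 2 := by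
  have hmem := (hPf x).1
  haveI : Nonempty C := ⟨⟨Pf x, hmem⟩⟩
  have heq : ‖x - Pf x‖ = ⨅ w : C, ‖x - w‖ := by
    refine le_antisymm (le_ciInf fun wc => (hPf x).2 wc wc.2) ?_
    exact ciInf_le ⟨0, fun _ ⟨_, h⟩ => h ▸ norm_nonneg _⟩ (⟨Pf x, hmem⟩ : C)
  have hinner : (inner ℝ (x - Pf x) (c - Pf x) : ℝ) ≤ 0 :=
    (norm_eq_iInf_iff_real_inner_le_zero hcv hmem).mp heq c hc
  have hexp : ‖x - c‖ ^ 2 = ‖x - Pf x‖ ^ 2 + 2 * (inner ℝ (x - Pf x) (Pf x - c) : ℝ) + ‖Pf x - c‖ ^ 2 := by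
    have := norm_add_sq_real (x - Pf x) (Pf x - c)
    rw [show x - Pf x + (Pf x - c) = x - c by abel] at this
    linarith
  have hneg : (inner ℝ (x - Pf x) (Pf x - c) : ℝ) = - (inner ℝ (x - Pf x) (c - Pf x) : ℝ) := by
    rw [show Pf x - c = -(c - Pf x) by abel, inner_neg_right]
  rw [hneg] at hexp
  linarith [hexp, hinner]

lemma string_sq_ineq {M : ℕ} {Cset : Fin M → Set H} (hcv : ∀ i, Convex ℝ (Cset i))
    {P : Fin M → H → H} (hP : ∀ i, IsMetricProj (Cset i) (P i)) {c : H}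
    (hc : ∀ i, c ∈ Cset i) : ∀ (L : List (Fin M)) (x : H),
    ‖stringProd P L x - c‖ ^ 2 ≤ ‖x - c‖ ^ 2 - stepSum P L x
  | [], x => by simp [stringProd, stepSum]
  | j :: L, x => by
      have h1 := metricProj_sq_ineq (hcv j) (hP j) x (hc j)
      have h2 := string_sq_ineq hcv hP hc L (P j x)
      simp only [stringProd, stepSum]
      linarith

lemma string_dist_sq {M : ℕ} (P : Fin M → H → H) : ∀ (L : List (Fin M)) (x : H),
    ‖x - stringProd P L x‖ ^ 2 ≤ (L.length : ℝ) * stepSum P L x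
  | [], x => by simp [stringProd, stepSum]
  | j :: L, x => by
      have IH := string_dist_sq P L (P j x)
      have hs := stepSum_nonneg P L (P j x)
      set a := ‖x - P j x‖ with ha
      set b := ‖P j x - stringProd P L (P j x)‖ with hb
      set s := stepSum P L (P j x) with hsdef
      have ha0 : 0 ≤ a := norm_nonneg _
      have hb0 : 0 ≤ b := norm_nonneg _
      have htri : ‖x - stringProd P L (P j x)‖ ≤ a + b := by
        rw [show x - stringProd P L (P j x)
            = (x - P j x) + (P j x - stringProd P L (P j x)) by abel]
        exact norm_add_le _ _
      have hsq : ‖x - stringProd P L (P j x)‖ ^ 2 ≤ (a + b) ^ 2 := by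
        have := pow_le_pow_left₀ (norm_nonneg _) htri 2
        exact this
      have hl0 : (0 : ℝ) ≤ (L.length : ℝ) := Nat.cast_nonneg _
      have key : (a + b) ^ 2 ≤ ((L.length : ℝ) + 1) * (a ^ 2 + s) := by
        rcases Nat.eq_zero_or_pos L.length with hl | hl
        · have : L = [] := List.length_eq_zero_iff.mp hl
          subst this
          have hb' : b = 0 := by simp [hb, stringProd]
          have hs' : s = 0 := by simp [hsdef, stepSum]
          rw [hb', hs', hl]
          norm_num
        · have hl1 : (1 : ℝ) ≤ (L.length : ℝ) := by exact_mod_cast hl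
          nlinarith [sq_nonneg ((L.length : ℝ) * a - b), IH, hs, mul_nonneg hl0 hs,
            mul_nonneg ha0 hb0]
      simp only [stringProd, stepSum, List.length_cons]
      push_cast
      exact hsq.trans key
  
lemma normsq_convex_comb {ι : Type*} (s : Finset ι) (w : ι → ℝ) (v : ι → H)
    (hw : ∀ n ∈ s, 0 ≤ w n) (hws : ∑ n ∈ s, w n = 1) :
    ‖∑ n ∈ s, w n • v n‖ ^ 2 ≤ ∑ n ∈ s, w n * ‖v n‖ ^ 2 := by
  have h1 : ‖∑ n ∈ s, w n • v n‖ ≤ ∑ n ∈ s, w n * ‖v n‖ := by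
    refine (norm_sum_le _ _).trans (le_of_eq (Finset.sum_congr rfl fun n hn => ?_))
    rw [norm_smul, Real.norm_eq_abs, abs_of_nonneg (hw n hn)]
  have h2 : (∑ n ∈ s, w n * ‖v n‖) ^ 2 ≤ ∑ n ∈ s, w n * ‖v n‖ ^ 2 := by
    have hcs := Finset.sum_mul_sq_le_sq_mul_sq s (fun n => Real.sqrt (w n))
      (fun n => Real.sqrt (w n) * ‖v n‖)
    have e1 : ∀ n ∈ s, Real.sqrt (w n) * (Real.sqrt (w n) * ‖v n‖) = w n * ‖v n‖ := by
      intro n hn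
      rw [← mul_assoc, Real.mul_self_sqrt (hw n hn)]
    have e2 : ∀ n ∈ s, Real.sqrt (w n) ^ 2 = w n := fun n hn => Real.sq_sqrt (hw n hn)
    have e3 : ∀ n ∈ s, (Real.sqrt (w n) * ‖v n‖) ^ 2 = w n * ‖v n‖ ^ 2 := by
      intro n hn
      rw [mul_pow, Real.sq_sqrt (hw n hn)]
    rw [Finset.sum_congr rfl e1, Finset.sum_congr rfl e2, Finset.sum_congr rfl e3, hws,
      one_mul] at hcs
    exact hcs
  calc ‖∑ n ∈ s, w n • v n‖ ^ 2 ≤ (∑ n ∈ s, w n * ‖v n‖) ^ 2 := by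
        apply pow_le_pow_left₀ (norm_nonneg _) h1
    _ ≤ _ := h2

lemma stringProd_fixed {M : ℕ} {Cset : Fin M → Set H} {P : Fin M → H → H}
    (hP : ∀ i, IsMetricProj (Cset i) (P i)) {c : H} (hc : ∀ i, c ∈ Cset i) :
    ∀ L : List (Fin M), stringProd P L c = c
  | [] => rfl
  | j :: L => by
      have hfix : P j c = c := by
        have h := (hP j c).2 c (hc j)
        simp only [sub_self, norm_zero] at h
        have : ‖c - P j c‖ = 0 := le_antisymm h (norm_nonneg _)
        have := norm_eq_zero.mp this
        have : c = P j c := by rwa [sub_eq_zero] at this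
        exact this.symm
      simp only [stringProd, hfix]
      exact stringProd_fixed hP hc L

lemma stepSum_zero_mem {M : ℕ} {Cset : Fin M → Set H} {P : Fin M → H → H}
    (hP : ∀ i, IsMetricProj (Cset i) (P i)) :
    ∀ (L : List (Fin M)) (x : H), stepSum P L x ≤ 0 → ∀ j ∈ L, x ∈ Cset j
  | [], x, _, j, hj => absurd hj List.not_mem_nil
  | j :: L, x, h, k, hk => by
      simp only [stepSum] at h
      have h1 : ‖x - P j x‖ ^ 2 ≤ 0 := by
        have := stepSum_nonneg P L (P j x); linarith
      have hfix : P j x = x := by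
        have : ‖x - P j x‖ = 0 := by
          have h0 : (0:ℝ) ≤ ‖x - P j x‖ ^ 2 := sq_nonneg _
          have : ‖x - P j x‖ ^ 2 = 0 := le_antisymm h1 h0
          exact pow_eq_zero_iff (by norm_num) |>.mp this
        have := norm_eq_zero.mp this
        have : x = P j x := by rwa [sub_eq_zero] at this
        exact this.symm
      rcases List.mem_cons.mp hk with hk | hk
      · subst hk
        rw [← hfix]; exact (hP k x).1
      · have h2 : stepSum P L x ≤ 0 := by
          rw [← hfix]
          have := stepSum_nonneg P L (P j x)
          nlinarith [sq_nonneg ‖x - P j x‖]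
        exact stepSum_zero_mem hP L x h2 k hk

end Aux

/-- The string averaging projection operator
`U = Σ_{n=1}^{N} ω_n ∏_{j ∈ J_n} P_{C_j}` (with strings covering `I = {1,…,M}`)
is `(1/m)`-strongly quasi-nonexpansive, where `m = max_n |J_n|`, and `Fix U = C = ⋂_i C_i`. -/
theorem stmt2 {H : Type*} [NormedAddCommGroup H] [InnerProductSpace ℝ H] [CompleteSpace H]
    {M N : ℕ} [NeZero M] [NeZero N]
    (Cset : Fin M → Set H) (hCcl : ∀ i, IsClosed (Cset i)) (hCcv : ∀ i, Convex ℝ (Cset i))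
    (hCne : (⋂ i, Cset i).Nonempty)
    (P : Fin M → H → H) (hP : ∀ i, IsMetricProj (Cset i) (P i))
    (J : Fin N → List (Fin M)) (w : Fin N → ℝ)
    (hw : ∀ n, w n ∈ Set.Ioo (0 : ℝ) 1) (hws : ∑ n, w n = 1)
    (hcover : ∀ i : Fin M, ∃ n, i ∈ J n)
    (U : H → H) (hU : ∀ y, U y = ∑ n, w n • stringProd P (J n) y)
    (m : ℕ) (hm : m = Finset.univ.sup fun n => (J n).length) :
    (∀ y : H, ∀ z ∈ Function.fixedPoints U,
        ‖U y - z‖ ^ 2 ≤ ‖y - z‖ ^ 2 - (1 / (m : ℝ)) * ‖y - U y‖ ^ 2) ∧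
      Function.fixedPoints U = ⋂ i, Cset i := by
  -- m ≥ 1
  have hmpos : 1 ≤ m := by
    obtain ⟨n0, hn0⟩ := hcover ⟨0, Nat.pos_of_ne_zero (NeZero.ne M)⟩
    have hlen : 1 ≤ (J n0).length := List.length_pos_iff.mpr (List.ne_nil_of_mem hn0)
    refine hlen.trans ?_
    rw [hm]
    exact Finset.le_sup (f := fun n => (J n).length) (Finset.mem_univ n0)
  have hmR : (0 : ℝ) < (m : ℝ) := by exact_mod_cast hmpos
  have hlenle : ∀ n, ((J n).length : ℝ) ≤ (m : ℝ) := by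
    intro n
    have : (J n).length ≤ m := by
      rw [hm]
      exact Finset.le_sup (f := fun n => (J n).length) (Finset.mem_univ n)
    exact_mod_cast this
  -- main inequality for c ∈ ⋂ Cset i
  have main : ∀ (y : H) (c : H), (∀ i, c ∈ Cset i) →
      ‖U y - c‖ ^ 2 ≤ ‖y - c‖ ^ 2 - ∑ n, w n * stepSum P (J n) y ∧
      ‖y - U y‖ ^ 2 ≤ (m : ℝ) * ∑ n, w n * stepSum P (J n) y := by
    intro y c hc
    set S : Fin N → ℝ := fun n => stepSum P (J n) y with hS
    have hSnn : ∀ n, 0 ≤ S n := fun n => stepSum_nonneg P (J n) y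
    have hwn : ∀ n ∈ Finset.univ, 0 ≤ w n := fun n _ => (hw n).1.le
    constructor
    · have hdiff : U y - c = ∑ n, w n • (stringProd P (J n) y - c) := by
        rw [hU y]
        simp only [smul_sub]
        rw [Finset.sum_sub_distrib, ← Finset.sum_smul, hws, one_smul]
      have h1 := normsq_convex_comb Finset.univ w (fun n => stringProd P (J n) y - c) hwn hws
      rw [← hdiff] at h1
      refine h1.trans ?_
      have : ∀ n ∈ Finset.univ, w n * ‖stringProd P (J n) y - c‖ ^ 2
          ≤ w n * (‖y - c‖ ^ 2 - S n) := by
        intro n _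
        exact mul_le_mul_of_nonneg_left (string_sq_ineq hCcv hP hc (J n) y) (hw n).1.le
      refine (Finset.sum_le_sum this).trans (le_of_eq ?_)
      rw [Finset.sum_congr rfl (fun n _ => mul_sub (w n) _ _), Finset.sum_sub_distrib,
        ← Finset.sum_mul, hws, one_mul]
    · have hdiff : y - U y = ∑ n, w n • (y - stringProd P (J n) y) := by
        rw [hU y]
        simp only [smul_sub]
        rw [Finset.sum_sub_distrib, ← Finset.sum_smul, hws, one_smul]
      have h1 := normsq_convex_comb Finset.univ w (fun n => y - stringProd P (J n) y) hwn hws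
      rw [← hdiff] at h1
      refine h1.trans ?_
      rw [Finset.mul_sum]
      refine Finset.sum_le_sum fun n _ => ?_
      have h2 : ‖y - stringProd P (J n) y‖ ^ 2 ≤ ((J n).length : ℝ) * S n :=
        string_dist_sq P (J n) y
      have h3 : ((J n).length : ℝ) * S n ≤ (m : ℝ) * S n :=
        mul_le_mul_of_nonneg_right (hlenle n) (hSnn n)
      calc w n * ‖y - stringProd P (J n) y‖ ^ 2 ≤ w n * ((m : ℝ) * S n) :=
            mul_le_mul_of_nonneg_left (h2.trans h3) (hw n).1.le
        _ = (m : ℝ) * (w n * S n) := by ring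
  -- C ⊆ Fix U
  have hCfix : ∀ c, (∀ i, c ∈ Cset i) → U c = c := by
    intro c hc
    rw [hU c]
    have : ∀ n ∈ Finset.univ, w n • stringProd P (J n) c = w n • c := by
      intro n _
      rw [stringProd_fixed hP hc]
    rw [Finset.sum_congr rfl this, ← Finset.sum_smul, hws, one_smul]
  -- Fix U ⊆ C
  have hfixC : ∀ z, U z = z → ∀ i, z ∈ Cset i := by
    intro z hz i
    obtain ⟨c, hc⟩ := hCne
    simp only [Set.mem_iInter] at hc
    obtain ⟨h1, _⟩ := main z c hc
    rw [hz] at h1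
    have hsum : ∑ n, w n * stepSum P (J n) z ≤ 0 := by linarith
    have hnn : ∀ n ∈ Finset.univ, 0 ≤ w n * stepSum P (J n) z :=
      fun n _ => mul_nonneg (hw n).1.le (stepSum_nonneg P (J n) z)
    have hzero : ∑ n, w n * stepSum P (J n) z = 0 :=
      le_antisymm hsum (Finset.sum_nonneg hnn)
    have heach : ∀ n, stepSum P (J n) z ≤ 0 := by
      intro n
      have := (Finset.sum_eq_zero_iff_of_nonneg hnn).mp hzero n (Finset.mem_univ n)
      have hwpos := (hw n).1
      nlinarith [stepSum_nonneg P (J n) z]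
    obtain ⟨n, hn⟩ := hcover i
    exact stepSum_zero_mem hP (J n) z (heach n) i hn
  have hFix : Function.fixedPoints U = ⋂ i, Cset i := by
    ext z
    simp only [Function.fixedPoints, Function.IsFixedPt, Set.mem_setOf_eq, Set.mem_iInter]
    exact ⟨fun h i => hfixC z h i, fun h => hCfix z h⟩
  refine ⟨?_, hFix⟩
  intro y z hz
  have hzC : ∀ i, z ∈ Cset i := by
    have := hFix ▸ hz
    simpa only [Set.mem_iInter] using this
  obtain ⟨h1, h2⟩ := main y z hzC
  have h3 : (1 / (m : ℝ)) * ‖y - U y‖ ^ 2 ≤ ∑ n, w n * stepSum P (J n) y := by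
    rw [div_mul_eq_mul_div, one_mul, div_le_iff₀ hmR]
    calc ‖y - U y‖ ^ 2 ≤ (m : ℝ) * ∑ n, w n * stepSum P (J n) y := h2
      _ = (∑ n, w n * stepSum P (J n) y) * (m : ℝ) := by ring
  linarith
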